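/- Let Q : ℝ^m → ℝ be differentiable at a ∈ [-1,1]^m, suppose Q attains its maximum over [-1,1]^m at a, and let P be a real n × m matrix such that for every index i with |a^i| = 1 and ∂Q/∂a^i(a) ≠ 0, the i-th column of P is zero. Then P · ∇Q(a) = 0, where ∇Q(a) ∈ ℝ^m is the gradient of Q at a. -/

import Mathlib

open Matrix

lemma interior_deriv_zero {m : ℕ} (Q : (Fin m → ℝ) → ℝ) (a : Fin m → ℝ)
    (hQ : DifferentiableAt ℝ Q a)
    (ha : ∀ i, a i ∈ Set.Icc (-1 : ℝ) 1)
    (hmax : ∀ b : Fin m → ℝ, (∀ i, b i ∈ Set.Icc (-1 : ℝ) 1) → Q b ≤ Q a)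
    (i : Fin m) (hi : |a i| < 1) : fderiv ℝ Q a (Pi.single i 1) = 0 := by
  set v : Fin m → ℝ := Pi.single i 1 with hv
  set φ : ℝ → (Fin m → ℝ) := fun t => a + t • v with hφ
  have hφ0 : φ 0 = a := by simp [hφ]
  have hder : HasDerivAt (fun t => Q (φ t)) (fderiv ℝ Q a v) 0 := by
    have h1 : HasDerivAt φ v 0 := by
      have : HasDerivAt (fun t : ℝ => t • v) ((1 : ℝ) • v) 0 :=
        (hasDerivAt_id 0).smul_const v
      simpa [hφ, one_smul] using this.const_add a
    have h2 : HasFDerivAt Q (fderiv ℝ Q a) (φ 0) := hφ0 ▸ hQ.hasFDerivAt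
    exact h2.comp_hasDerivAt 0 h1
  have hloc : IsLocalMax (fun t => Q (φ t)) 0 := by
    have hpos : (0 : ℝ) < 1 - |a i| := by linarith
    filter_upwards [Metric.ball_mem_nhds (0 : ℝ) hpos] with t ht
    have htabs : |t| < 1 - |a i| := by simpa [Real.dist_eq] using ht
    have := hmax (φ t) ?_
    · simpa [hφ0] using this
    · intro j
      by_cases hj : j = i
      · subst hj
        have hφtj : φ t j = a j + t := by simp [hφ, hv, Pi.single_apply]
        rw [hφtj]
        have h1 : |a j + t| ≤ 1 := by
          calc |a j + t| ≤ |a j| + |t| := abs_add_le _ _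
            _ ≤ 1 := by linarith
        exact abs_le.mp h1
      · have : φ t j = a j := by simp [hφ, hv, Pi.single_apply, hj]
        rw [this]; exact ha j
  have := hloc.hasDerivAt_eq_zero hder
  simpa [hv] using this

/-- if `Q` is maximized over the box `[-1,1]^m` at `a` and the
columns of `P` vanish at every saturated coordinate, then `P ⬝ ∇Q(a) = 0`. -/
theorem stmt2 {n m : ℕ} (Q : (Fin m → ℝ) → ℝ) (a : Fin m → ℝ)
    (hQ : DifferentiableAt ℝ Q a)
    (ha : ∀ i, a i ∈ Set.Icc (-1 : ℝ) 1)
    (hmax : ∀ b : Fin m → ℝ, (∀ i, b i ∈ Set.Icc (-1 : ℝ) 1) → Q b ≤ Q a)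
    (P : Matrix (Fin n) (Fin m) ℝ)
    (hP : ∀ i, |a i| = 1 → fderiv ℝ Q a (Pi.single i 1) ≠ 0 → ∀ j, P j i = 0) :
    P.mulVec (fun i => fderiv ℝ Q a (Pi.single i 1)) = 0 := by
  funext j
  simp only [mulVec, dotProduct, Pi.zero_apply]
  apply Finset.sum_eq_zero
  intro i _
  by_cases hg : fderiv ℝ Q a (Pi.single i 1) = 0
  · simp [hg]
  · have hab : |a i| ≤ 1 := abs_le.mpr (ha i)
    have heq : |a i| = 1 := by
      rcases lt_or_eq_of_le hab with h | h
      · exact absurd (interior_deriv_zero Q a hQ ha hmax i h) hg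
      · exact h
    simp [hP i heq hg j]
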